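/- Let L be a diffusive symmetric Markov generator with discrete spectrum, Fᵢ ∈ ker(L + λ_{k_i} Id) and Fⱼ ∈ ker(L + λ_{k_j} Id) jointly chaotic eigenfunctions (i.e., Fᵢ Fⱼ ∈ ⊕_{r: λ_r ≤ λ_{k_i}+λ_{k_j}} ker(L + λ_r Id)), and C_{ij} ∈ ℝ. Then with a_{ij} = 2λ_{k_j}/(λ_{k_i}+λ_{k_j}), ∫_E (Γ(Fᵢ, -L⁻¹Fⱼ) - C_{ij})² dμ ≤ (1/(a_{ij}λ_{k_j})) ∫_E (FᵢFⱼ - a_{ij}C_{ij})(Γ(Fᵢ,Fⱼ) - λ_{k_j}C_{ij}) dμ. -/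

import Mathlib

open MeasureTheory Finset

/-- for jointly chaotic eigenfunctions `Fᵢ ∈ ker(L + λ_{k_i} Id)`,
`Fⱼ ∈ ker(L + λ_{k_j} Id)` (so `FᵢFⱼ` decomposes along eigenspaces with eigenvalues
`≤ λ_{k_i}+λ_{k_j}`) and any `C_{ij} ∈ ℝ`, with `a_{ij} = 2λ_{k_j}/(λ_{k_i}+λ_{k_j})`
and `-L⁻¹Fⱼ = (1/λ_{k_j})Fⱼ`:
`∫ (Γ(Fᵢ,-L⁻¹Fⱼ) - C_{ij})² dμ
  ≤ (1/(a_{ij}λ_{k_j})) ∫ (FᵢFⱼ - a_{ij}C_{ij})(Γ(Fᵢ,Fⱼ) - λ_{k_j}C_{ij}) dμ`. -/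
theorem stmt_18 {E : Type*} [MeasurableSpace E] (μ : Measure E) [IsProbabilityMeasure μ]
    (L : (E → ℝ) →ₗ[ℝ] (E → ℝ)) (hL1 : L (fun _ => 1) = 0)
    (hsym : ∀ f g : E → ℝ, Integrable (fun x => f x * L g x) μ →
      Integrable (fun x => L f x * g x) μ →
      ∫ x, f x * L g x ∂μ = ∫ x, L f x * g x ∂μ)
    (Γ : (E → ℝ) → (E → ℝ) → (E → ℝ))
    (hΓ : ∀ f g : E → ℝ, Γ f g = fun x =>
      (1 / 2) * (L (fun y => f y * g y) x - f x * L g x - g x * L f x))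
    (lam : ℕ → ℝ) (hlam0 : lam 0 = 0) (hmono : StrictMono lam)
    (lki lkj : ℝ) (hki : 0 < lki) (hkj : 0 < lkj)
    (Fi Fj : E → ℝ)
    (heigi : L Fi = fun x => -lki * Fi x)
    (heigj : L Fj = fun x => -lkj * Fj x)
    -- joint chaoticity: FᵢFⱼ decomposes along eigenspaces with eigenvalues ≤ λ_{k_i}+λ_{k_j}
    (S : Finset ℕ) (hS : ∀ r ∈ S, lam r ≤ lki + lkj)
    (q : ℕ → E → ℝ) (heigq : ∀ r ∈ S, L (q r) = fun x => -lam r * q r x)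
    (hchaos : ∀ x, Fi x * Fj x = ∑ r ∈ S, q r x)
    (hmem : ∀ r, MemLp (q r) 2 μ)
    (horth : ∀ r ∈ S, ∀ s ∈ S, r ≠ s → ∫ x, q r x * q s x ∂μ = 0)
    (Cij : ℝ) (a : ℝ) (ha : a = 2 * lkj / (lki + lkj))
    (hint1 : Integrable (fun x => (Γ Fi (fun y => (1 / lkj) * Fj y) x - Cij) ^ 2) μ)
    (hint2 : Integrable
      (fun x => (Fi x * Fj x - a * Cij) * (Γ Fi Fj x - lkj * Cij)) μ) :
    ∫ x, (Γ Fi (fun y => (1 / lkj) * Fj y) x - Cij) ^ 2 ∂μ ≤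
      (1 / (a * lkj)) *
        ∫ x, (Fi x * Fj x - a * Cij) * (Γ Fi Fj x - lkj * Cij) ∂μ := by
  
  have hη : (0:ℝ) < lki + lkj := by linarith
  have hηne : (lki + lkj) ≠ 0 := ne_of_gt hη
  have hkjne : lkj ≠ 0 := ne_of_gt hkj
  have ha' : a * (lki + lkj) = 2 * lkj := by rw [ha]; field_simp
  have hapos : 0 < a := by rw [ha]; positivity
  have hane : a ≠ 0 := ne_of_gt hapos
  have hlamnn : ∀ r, 0 ≤ lam r := fun r => hlam0 ▸ hmono.monotone (Nat.zero_le r)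
  -- basic integrability
  have hqint : ∀ r, Integrable (q r) μ := fun r => (hmem r).integrable one_le_two
  have hqq : ∀ r s, Integrable (fun x => q r x * q s x) μ := by
    intro r s
    have h1 := ((hmem r).add (hmem s)).integrable_sq
    have h2 := (hmem r).integrable_sq
    have h3 := (hmem s).integrable_sq
    have h4 := ((h1.sub h2).sub h3).const_mul (1/2 : ℝ)
    convert h4 using 1
    funext x
    simp only [Pi.add_apply, Pi.sub_apply]
    ring
  -- weighted means vanish
  have hI : ∀ r ∈ S, lam r * ∫ x, q r x ∂μ = 0 := by
    intro r hr
    have hint_a : Integrable (fun x => (1:ℝ) * L (q r) x) μ := by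
      simp only [heigq r hr]
      exact ((hqint r).const_mul (-lam r)).const_mul 1
    have hint_b : Integrable (fun x => L (fun _ => (1:ℝ)) x * q r x) μ := by
      simp only [hL1, Pi.zero_apply, zero_mul]
      exact integrable_zero _ _ _
    have h := hsym (fun _ => 1) (q r) hint_a hint_b
    simp only [heigq r hr, hL1, Pi.zero_apply, zero_mul, one_mul, integral_zero] at h
    rw [integral_const_mul] at h
    simp only [neg_mul, neg_eq_zero] at h
    exact h
  -- Γ formulas
  have hfg : (fun y => Fi y * Fj y) = (∑ r ∈ S, q r) := by
    funext y; rw [hchaos y, Finset.sum_apply]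
  have hLfg : ∀ x, L (fun y => Fi y * Fj y) x = ∑ r ∈ S, -lam r * q r x := by
    intro x
    rw [hfg, map_sum, Finset.sum_apply]
    exact Finset.sum_congr rfl fun r hr => by rw [heigq r hr]
  have hGij : ∀ x, Γ Fi Fj x = (1/2) * ∑ r ∈ S, ((lki + lkj) - lam r) * q r x := by
    intro x
    rw [congrFun (hΓ Fi Fj) x, hLfg x]
    simp only [heigi, heigj]
    have hB : ∑ r ∈ S, ((lki + lkj) - lam r) * q r x
        = (∑ r ∈ S, -lam r * q r x) + (lki + lkj) * (Fi x * Fj x) := by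
      rw [hchaos x, Finset.mul_sum, ← Finset.sum_add_distrib]
      exact Finset.sum_congr rfl fun r _ => by ring
    rw [hB]; ring
  have hGscale : ∀ x, Γ Fi (fun y => (1 / lkj) * Fj y) x = (1/lkj) * Γ Fi Fj x := by
    intro x
    have e1 : (fun y => Fi y * ((1/lkj) * Fj y)) = (1/lkj) • (fun y => Fi y * Fj y) := by
      funext y; simp only [Pi.smul_apply, smul_eq_mul]; ring
    have e2 : (fun y => (1/lkj) * Fj y) = (1/lkj) • Fj := by
      funext y; simp only [Pi.smul_apply, smul_eq_mul]
    rw [congrFun (hΓ Fi (fun y => (1 / lkj) * Fj y)) x, congrFun (hΓ Fi Fj) x]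
    rw [show (fun y => Fi y * (1 / lkj * Fj y)) = (1/lkj) • (fun y => Fi y * Fj y) from e1]
    rw [e2, L.map_smul, L.map_smul]
    simp only [Pi.smul_apply, smul_eq_mul, heigi, heigj]
    ring
  -- pointwise integrand identities
  have hLHSpt : ∀ x, (Γ Fi (fun y => (1 / lkj) * Fj y) x - Cij) ^ 2
      = (1/(2*lkj))^2 * (∑ r ∈ S, ((lki + lkj) - lam r) * q r x - 2*lkj*Cij)^2 := by
    intro x
    rw [hGscale x, hGij x]
    field_simp
  have hRHSpt : ∀ x, (Fi x * Fj x - a * Cij) * (Γ Fi Fj x - lkj * Cij)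
      = (1/2) * ((∑ r ∈ S, q r x - a*Cij)
          * (∑ r ∈ S, ((lki + lkj) - lam r) * q r x - 2*lkj*Cij)) := by
    intro x
    rw [hGij x, hchaos x]
    ring
  -- integrability of the reduced integrands
  have hD2 : Integrable
      (fun x => (∑ r ∈ S, ((lki + lkj) - lam r) * q r x - 2*lkj*Cij)^2) μ := by
    have h := hint1.const_mul ((2*lkj)^2)
    convert h using 1
    funext x
    rw [hLHSpt x]
    field_simp
  have hQD : Integrable
      (fun x => (∑ r ∈ S, q r x - a*Cij)
        * (∑ r ∈ S, ((lki + lkj) - lam r) * q r x - 2*lkj*Cij)) μ := by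
    have h := hint2.const_mul 2
    convert h using 1
    funext x
    rw [hRHSpt x]
    ring
  have hqD : ∀ r, Integrable
      (fun x => q r x * (∑ s ∈ S, ((lki + lkj) - lam s) * q s x - 2*lkj*Cij)) μ := by
    intro r
    have h1 : Integrable (fun x => ∑ s ∈ S, ((lki + lkj) - lam s) * (q r x * q s x)) μ :=
      integrable_finset_sum _ fun s _ => (hqq r s).const_mul _
    have h := h1.sub ((hqint r).const_mul (2*lkj*Cij))
    convert h using 1
    funext x
    rw [mul_sub, Finset.mul_sum]
    congr 1
    · exact Finset.sum_congr rfl fun s _ => by ring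
    · ring
  -- value of single integrals
  have hqDval : ∀ r ∈ S,
      ∫ x, q r x * (∑ s ∈ S, ((lki + lkj) - lam s) * q s x - 2*lkj*Cij) ∂μ
      = ((lki + lkj) - lam r) * ∫ x, q r x * q r x ∂μ - 2*lkj*Cij * ∫ x, q r x ∂μ := by
    intro r hr
    have e : ∀ x, q r x * (∑ s ∈ S, ((lki + lkj) - lam s) * q s x - 2*lkj*Cij)
        = ∑ s ∈ S, ((lki + lkj) - lam s) * (q r x * q s x) - 2*lkj*Cij * q r x := by
      intro x
      rw [mul_sub, Finset.mul_sum]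
      congr 1
      · exact Finset.sum_congr rfl fun s _ => by ring
      · ring
    simp only [e]
    rw [integral_sub (integrable_finset_sum _ fun s _ => (hqq r s).const_mul _)
      ((hqint r).const_mul _)]
    rw [integral_finset_sum _ fun s _ => (hqq r s).const_mul _]
    simp only [integral_const_mul]
    rw [Finset.sum_eq_single_of_mem r hr
      (fun s hs hne => by rw [horth r hr s hs (Ne.symm hne), mul_zero])]
  -- total sum integral
  have hsum : ∫ x, (∑ r ∈ S, lam r * q r x)
        * (∑ s ∈ S, ((lki + lkj) - lam s) * q s x - 2*lkj*Cij) ∂μ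
      = ∑ r ∈ S, lam r * (((lki + lkj) - lam r) * ∫ x, q r x * q r x ∂μ) := by
    have e : ∀ x, (∑ r ∈ S, lam r * q r x)
        * (∑ s ∈ S, ((lki + lkj) - lam s) * q s x - 2*lkj*Cij)
        = ∑ r ∈ S, lam r * (q r x * (∑ s ∈ S, ((lki + lkj) - lam s) * q s x - 2*lkj*Cij)) := by
      intro x
      rw [Finset.sum_mul]
      exact Finset.sum_congr rfl fun r _ => by ring
    simp only [e]
    rw [integral_finset_sum _ fun r _ => (hqD r).const_mul _]
    refine Finset.sum_congr rfl fun r hr => ?_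
    rw [integral_const_mul, hqDval r hr]
    have h := hI r hr
    linear_combination (-(2*lkj*Cij)) * h
  -- key spectral inequality
  have hkey : ∫ x, (∑ r ∈ S, ((lki + lkj) - lam r) * q r x - 2*lkj*Cij)^2 ∂μ
      ≤ (lki + lkj) * ∫ x, (∑ r ∈ S, q r x - a*Cij)
          * (∑ r ∈ S, ((lki + lkj) - lam r) * q r x - 2*lkj*Cij) ∂μ := by
    have hdiff : (lki + lkj) * (∫ x, (∑ r ∈ S, q r x - a*Cij)
          * (∑ s ∈ S, ((lki + lkj) - lam s) * q s x - 2*lkj*Cij) ∂μ)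
        - ∫ x, (∑ r ∈ S, ((lki + lkj) - lam r) * q r x - 2*lkj*Cij)^2 ∂μ
        = ∫ x, (∑ r ∈ S, lam r * q r x)
            * (∑ s ∈ S, ((lki + lkj) - lam s) * q s x - 2*lkj*Cij) ∂μ := by
      rw [← integral_const_mul, ← integral_sub (hQD.const_mul _) hD2]
      congr 1
      funext x
      have hs : (lki + lkj) * (∑ r ∈ S, q r x)
          - (∑ r ∈ S, ((lki + lkj) - lam r) * q r x) = ∑ r ∈ S, lam r * q r x := by
        rw [Finset.mul_sum, ← Finset.sum_sub_distrib]
        exact Finset.sum_congr rfl fun r _ => by ring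
      linear_combination (∑ r ∈ S, ((lki + lkj) - lam r) * q r x - 2*lkj*Cij) * hs
        + (- Cij * (∑ r ∈ S, ((lki + lkj) - lam r) * q r x - 2*lkj*Cij)) * ha'
    have hpos : 0 ≤ ∑ r ∈ S, lam r * (((lki + lkj) - lam r) * ∫ x, q r x * q r x ∂μ) :=
      Finset.sum_nonneg fun r hr => mul_nonneg (hlamnn r)
        (mul_nonneg (by linarith [hS r hr]) (integral_nonneg fun x => mul_self_nonneg _))
    rw [hsum] at hdiff
    linarith
  -- assemble
  have hLHS : ∫ x, (Γ Fi (fun y => (1 / lkj) * Fj y) x - Cij) ^ 2 ∂μ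
      = (1/(2*lkj))^2 * ∫ x, (∑ r ∈ S, ((lki + lkj) - lam r) * q r x - 2*lkj*Cij)^2 ∂μ := by
    simp only [hLHSpt]
    rw [integral_const_mul]
  have hRHS : ∫ x, (Fi x * Fj x - a * Cij) * (Γ Fi Fj x - lkj * Cij) ∂μ
      = (1/2) * ∫ x, (∑ r ∈ S, q r x - a*Cij)
          * (∑ r ∈ S, ((lki + lkj) - lam r) * q r x - 2*lkj*Cij) ∂μ := by
    simp only [hRHSpt]
    rw [integral_const_mul]
  rw [hLHS, hRHS]
  have hc : (1/(2*lkj))^2 * (lki + lkj) = 1/(a*lkj) * (1/2) := by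
    field_simp
    linear_combination ha'
  calc (1/(2*lkj))^2 * ∫ x, (∑ r ∈ S, ((lki + lkj) - lam r) * q r x - 2*lkj*Cij)^2 ∂μ
      ≤ (1/(2*lkj))^2 * ((lki + lkj) * ∫ x, (∑ r ∈ S, q r x - a*Cij)
          * (∑ r ∈ S, ((lki + lkj) - lam r) * q r x - 2*lkj*Cij) ∂μ) :=
        mul_le_mul_of_nonneg_left hkey (by positivity)
    _ = 1/(a*lkj) * ((1/2) * ∫ x, (∑ r ∈ S, q r x - a*Cij)
          * (∑ r ∈ S, ((lki + lkj) - lam r) * q r x - 2*lkj*Cij) ∂μ) := by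
        rw [← mul_assoc, hc, mul_assoc]
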